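/- Consider the SAP iteration: let A be a real m×n matrix, x ∈ ℝⁿ, b = A·x with Aᵀ·b ≠ 0, and let A₁, …, A_k be submatrices of A formed by groups of rows of A whose union comprises all rows of A. Define x₀ = (‖b‖²/‖Aᵀ·b‖²)·(Aᵀ·b), and for each s ≥ 0 define recursively p⁽ˢ⁾₀ = x_s and, for i = 1, …, k, p⁽ˢ⁾ᵢ = the orthogonal projection of x onto the subspace spanned by p⁽ˢ⁾ᵢ₋₁ together with the rows of Aᵢ; set x_{s+1} = p⁽ˢ⁾_k. Let x̄ be the orthogonal projection of x onto the row space of A. Then for every s, ‖x_s‖ ≤ ‖x̄‖, and whenever x_s ≠ x̄ one has the strict inequalities ‖x_s‖ < ‖x_{s+1}‖ and ‖x_s‖ < ‖x̄‖. -/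

import Mathlib

set_option maxHeartbeats 800000


open scoped RealInnerProductSpace
open Matrix

/-- The subspace spanned by a vector `q` together with the rows of the block of
`A` indexed by `g i`. -/
def sapBlockSubspace {m n : ℕ} (A : Matrix (Fin m) (Fin n) ℝ)
    (g : ℕ → Set (Fin m)) (q : EuclideanSpace ℝ (Fin n)) (i : ℕ) :
    Submodule ℝ (EuclideanSpace ℝ (Fin n)) :=
  Submodule.span ℝ (insert q ((fun j : Fin m => (WithLp.toLp 2 (A j) : EuclideanSpace ℝ (Fin n))) '' g i))

lemma sap_mem_span {m n : ℕ} (A : Matrix (Fin m) (Fin n) ℝ) (b : EuclideanSpace ℝ (Fin m)) :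
    (WithLp.toLp 2 (Aᵀ.mulVec b) : EuclideanSpace ℝ (Fin n)) ∈
      Submodule.span ℝ (Set.range fun j : Fin m => (WithLp.toLp 2 (A j) : EuclideanSpace ℝ (Fin n))) := by
  have h : (WithLp.toLp 2 (Aᵀ.mulVec b) : EuclideanSpace ℝ (Fin n))
      = ∑ i : Fin m, b i • (WithLp.toLp 2 (A i) : EuclideanSpace ℝ (Fin n)) := by
    ext j
    simp [Matrix.mulVec, dotProduct, mul_comm]
  rw [h]
  exact Submodule.sum_mem _ fun i _ => Submodule.smul_mem _ _ (Submodule.subset_span ⟨i, rfl⟩)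

lemma sap_inner_adjoint {m n : ℕ} (A : Matrix (Fin m) (Fin n) ℝ)
    (v : EuclideanSpace ℝ (Fin n)) (w : EuclideanSpace ℝ (Fin m)) :
    ⟪v, (WithLp.toLp 2 (Aᵀ.mulVec w) : EuclideanSpace ℝ (Fin n))⟫ =
      ⟪(WithLp.toLp 2 (A.mulVec v) : EuclideanSpace ℝ (Fin m)), w⟫ := by
  simp only [PiLp.inner_apply, RCLike.inner_apply, conj_trivial, Matrix.mulVec,
    dotProduct, Matrix.transpose_apply, Finset.mul_sum, Finset.sum_mul]
  rw [Finset.sum_comm]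
  exact Finset.sum_congr rfl fun i _ => Finset.sum_congr rfl fun j _ => by ring

lemma sap_pyth {E : Type*} [NormedAddCommGroup E] [InnerProductSpace ℝ E] {p q : E}
    (h : ⟪p - q, q⟫ = 0) : ‖p‖ ^ 2 = ‖p - q‖ ^ 2 + ‖q‖ ^ 2 := by
  have h2 := norm_add_sq_real (p - q) q
  rw [sub_add_cancel, h] at h2
  linarith

/-- along the SAP iteration, `‖x_s‖ ≤ ‖x̄‖` for every `s`, and
whenever `x_s ≠ x̄` one has the strict inequalities `‖x_s‖ < ‖x_{s+1}‖` and
`‖x_s‖ < ‖x̄‖`, where `x̄` is the orthogonal projection of `x` onto the row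
space of `A`. -/
theorem sap_monotone_norms {m n k : ℕ}
    (A : Matrix (Fin m) (Fin n) ℝ) (x : EuclideanSpace ℝ (Fin n))
    (b : EuclideanSpace ℝ (Fin m)) (hb : b = A.mulVec x)
    (Atb : EuclideanSpace ℝ (Fin n)) (hAtb : Atb = Aᵀ.mulVec b) (hne : Atb ≠ 0)
    (g : ℕ → Set (Fin m)) (hcover : ∀ j : Fin m, ∃ i < k, j ∈ g i)
    (xseq : ℕ → EuclideanSpace ℝ (Fin n))
    (h0 : xseq 0 = (‖b‖ ^ 2 / ‖Atb‖ ^ 2) • Atb)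
    (hstep : ∀ s : ℕ, ∃ p : ℕ → EuclideanSpace ℝ (Fin n),
      p 0 = xseq s ∧ p k = xseq (s + 1) ∧
      ∀ i < k, p (i + 1) ∈ sapBlockSubspace A g (p i) i ∧
        ∀ w ∈ sapBlockSubspace A g (p i) i, ⟪x - p (i + 1), w⟫ = 0)
    (xbar : EuclideanSpace ℝ (Fin n))
    (hxbarmem : xbar ∈ Submodule.span ℝ
      (Set.range fun j : Fin m => (WithLp.toLp 2 (A j) : EuclideanSpace ℝ (Fin n))))
    (hxbarorth : ∀ w ∈ Submodule.span ℝ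
      (Set.range fun j : Fin m => (WithLp.toLp 2 (A j) : EuclideanSpace ℝ (Fin n))),
      ⟪x - xbar, w⟫ = 0) :
    ∀ s : ℕ, ‖xseq s‖ ≤ ‖xbar‖ ∧
      (xseq s ≠ xbar → ‖xseq s‖ < ‖xseq (s + 1)‖ ∧ ‖xseq s‖ < ‖xbar‖) := by
  set R := Submodule.span ℝ (Set.range fun j : Fin m => (WithLp.toLp 2 (A j) : EuclideanSpace ℝ (Fin n)))
    with hRdef
  -- base case facts
  have hAtb' : Atb = WithLp.toLp 2 (Aᵀ.mulVec b) := by rw [← hAtb]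
  have habn : ‖Atb‖ ≠ 0 := fun h => hne (norm_eq_zero.mp h)
  have hxAtb : ⟪x, Atb⟫ = ‖b‖ ^ 2 := by
    rw [hAtb']
    calc ⟪x, (WithLp.toLp 2 (Aᵀ.mulVec b) : EuclideanSpace ℝ (Fin n))⟫
        = ⟪(WithLp.toLp 2 (A.mulVec x) : EuclideanSpace ℝ (Fin m)), b⟫ := sap_inner_adjoint A x b
      _ = ‖b‖ ^ 2 := by rw [← hb, WithLp.toLp_ofLp, real_inner_self_eq_norm_sq]
  have base : xseq 0 ∈ R ∧ ⟪x - xseq 0, xseq 0⟫ = 0 := by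
    constructor
    · rw [h0, hAtb']
      exact Submodule.smul_mem _ _ (sap_mem_span A b)
    · rw [h0, inner_sub_left, real_inner_smul_right, real_inner_smul_left,
        real_inner_smul_right, hxAtb, real_inner_self_eq_norm_sq]
      field_simp
      ring
  -- comparing a candidate with xbar
  have bound : ∀ q : EuclideanSpace ℝ (Fin n), q ∈ R → ⟪x - q, q⟫ = 0 →
      ‖q‖ ≤ ‖xbar‖ ∧ (q ≠ xbar → ‖q‖ < ‖xbar‖) := by
    intro q hqR hq
    have hxq : ⟪xbar - q, q⟫ = 0 := by
      have e : xbar - q = (x - q) - (x - xbar) := by abel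
      rw [e, inner_sub_left, hq, hxbarorth q hqR, sub_zero]
    have hpyth : ‖xbar‖ ^ 2 = ‖xbar - q‖ ^ 2 + ‖q‖ ^ 2 := sap_pyth hxq
    constructor
    · nlinarith [sq_nonneg ‖xbar - q‖, norm_nonneg q, norm_nonneg xbar]
    · intro hne2
      have h3 : ‖xbar - q‖ ≠ 0 := fun h => hne2 ((sub_eq_zero.mp (norm_eq_zero.mp h)).symm)
      have h4 : 0 < ‖xbar - q‖ := lt_of_le_of_ne (norm_nonneg _) (Ne.symm h3)
      nlinarith [norm_nonneg q, norm_nonneg xbar]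
  -- key step lemma
  have key : ∀ s : ℕ, (xseq s ∈ R ∧ ⟪x - xseq s, xseq s⟫ = 0) →
      ((xseq (s + 1) ∈ R ∧ ⟪x - xseq (s + 1), xseq (s + 1)⟫ = 0) ∧
       ‖xseq s‖ ≤ ‖xseq (s + 1)‖ ∧
       (‖xseq (s + 1)‖ ≤ ‖xseq s‖ → xseq s = xbar)) := by
    intro s hs
    obtain ⟨p, hp0, hpk, hp⟩ := hstep s
    have claim : ∀ i, i ≤ k → p i ∈ R ∧ ⟪x - p i, p i⟫ = 0 ∧ ‖p 0‖ ≤ ‖p i‖ ∧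
        (‖p i‖ ≤ ‖p 0‖ → ∀ j ≤ i, p j = p 0) := by
      intro i
      induction i with
      | zero =>
        intro _
        refine ⟨by rw [hp0]; exact hs.1, by rw [hp0]; exact hs.2, le_rfl, ?_⟩
        intro _ j hj
        rw [Nat.le_zero.mp hj]
      | succ i ih =>
        intro hik
        have hik' : i < k := hik
        obtain ⟨hiR, hiInner, hiLe, hiEq⟩ := ih hik'.le
        obtain ⟨hmemW, horth⟩ := hp i hik'
        have hWle : sapBlockSubspace A g (p i) i ≤ R := by
          apply Submodule.span_le.mpr
          intro w hw
          rcases Set.mem_insert_iff.mp hw with rfl | hw'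
          · exact hiR
          · obtain ⟨j, _, rfl⟩ := hw'
            exact Submodule.subset_span ⟨j, rfl⟩
        have h1R : p (i + 1) ∈ R := hWle hmemW
        have hself : ⟪x - p (i + 1), p (i + 1)⟫ = 0 := horth _ hmemW
        have hprev : ⟪x - p (i + 1), p i⟫ = 0 :=
          horth _ (Submodule.subset_span (Set.mem_insert _ _))
        have hdiff : ⟪p (i + 1) - p i, p i⟫ = 0 := by
          have e : p (i + 1) - p i = (x - p i) - (x - p (i + 1)) := by abel
          rw [e, inner_sub_left, hiInner, hprev, sub_zero]
        have hpyth : ‖p (i + 1)‖ ^ 2 = ‖p (i + 1) - p i‖ ^ 2 + ‖p i‖ ^ 2 := sap_pyth hdiff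
        have hmono : ‖p i‖ ≤ ‖p (i + 1)‖ := by
          nlinarith [sq_nonneg ‖p (i + 1) - p i‖, norm_nonneg (p i), norm_nonneg (p (i + 1))]
        refine ⟨h1R, hself, le_trans hiLe hmono, ?_⟩
        intro hle j hj
        have h2 : ‖p i‖ ≤ ‖p 0‖ := le_trans hmono hle
        have hall := hiEq h2
        have hzero : p (i + 1) = p i := by
          have h3 : ‖p (i + 1)‖ ≤ ‖p i‖ := le_trans hle hiLe
          have h5 : ‖p (i + 1) - p i‖ ^ 2 ≤ 0 := by
            nlinarith [norm_nonneg (p (i + 1)), norm_nonneg (p i)]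
          have h6 : ‖p (i + 1) - p i‖ ^ 2 = 0 := le_antisymm h5 (sq_nonneg _)
          have h7 : ‖p (i + 1) - p i‖ = 0 := sq_eq_zero_iff.mp h6
          exact sub_eq_zero.mp (norm_eq_zero.mp h7)
        rcases Nat.eq_or_lt_of_le hj with rfl | hj'
        · rw [hzero]; exact hall i le_rfl
        · exact hall j (Nat.lt_succ_iff.mp hj')
    obtain ⟨hkR, hkInner, hkLe, hkEq⟩ := claim k le_rfl
    rw [hpk] at hkR hkInner
    rw [hp0, hpk] at hkLe
    refine ⟨⟨hkR, hkInner⟩, hkLe, ?_⟩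
    intro hle
    have hall := hkEq (by rw [hp0, hpk]; exact hle)
    have hrow : ∀ jr : Fin m, ⟪x - xseq s, (WithLp.toLp 2 (A jr) : EuclideanSpace ℝ (Fin n))⟫ = 0 := by
      intro jr
      obtain ⟨i, hik, hmem⟩ := hcover jr
      have h1 := (hp i hik).2 (WithLp.toLp 2 (A jr))
        (Submodule.subset_span (Set.mem_insert_of_mem _ ⟨jr, hmem, rfl⟩))
      rwa [hall (i + 1) hik, hp0] at h1
    have horthall : ∀ w ∈ R, ⟪x - xseq s, w⟫ = 0 := by
      intro w hw
      rw [hRdef] at hw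
      induction hw using Submodule.span_induction with
      | mem w hw => obtain ⟨jr, rfl⟩ := hw; exact hrow jr
      | zero => exact inner_zero_right _
      | add u v _ _ hu hv => rw [inner_add_right, hu, hv, add_zero]
      | smul a u _ hu => rw [real_inner_smul_right, hu, mul_zero]
    have hsub : xbar - xseq s ∈ R := Submodule.sub_mem _ hxbarmem hs.1
    have hz : ⟪xbar - xseq s, xbar - xseq s⟫ = 0 := by
      have e : xbar - xseq s = (x - xseq s) - (x - xbar) := by abel
      nth_rewrite 1 [e]
      rw [inner_sub_left, horthall _ hsub, hxbarorth _ hsub, sub_zero]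
    exact (sub_eq_zero.mp (inner_self_eq_zero.mp hz)).symm
  -- invariant for all s
  have inv : ∀ s : ℕ, xseq s ∈ R ∧ ⟪x - xseq s, xseq s⟫ = 0 := by
    intro s
    induction s with
    | zero => exact base
    | succ s ih => exact (key s ih).1
  -- conclude
  intro s
  have hs := inv s
  refine ⟨(bound _ hs.1 hs.2).1, fun hne2 => ⟨?_, (bound _ hs.1 hs.2).2 hne2⟩⟩
  rcases lt_or_ge ‖xseq s‖ ‖xseq (s + 1)‖ with h | h
  · exact h
  · exact absurd ((key s hs).2.2 h) hne2
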